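/- arXiv:2103.09587 — 4 statements merged into one kernel-verified Lean document; each statement's English description precedes it below -/
import Mathlib

section
/- For all languages U, V over an alphabet Σ, (U ∪ V)^{⧢,*} = U^{⧢,*} ⧢ V^{⧢,*}. -/
/-- `IsShuffle u v w` means `w` is an interleaving (shuffle) of `u` and `v`,
i.e. `w = x₁y₁⋯xₙyₙ` with `u = x₁⋯xₙ` and `v = y₁⋯yₙ`. -/
inductive IsShuffle {α : Type*} : List α → List α → List α → Prop
  | nil : IsShuffle [] [] []
  | left {a : α} {u v w : List α} : IsShuffle u v w → IsShuffle (a :: u) v (a :: w)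
  | right {a : α} {u v w : List α} : IsShuffle u v w → IsShuffle u (a :: v) (a :: w)

/-- Shuffle of two languages: `U ⧢ V = ⋃_{x∈U, y∈V} (x ⧢ y)`. -/
def Language.shuffle {α : Type*} (U V : Language α) : Language α :=
  { w | ∃ u ∈ U, ∃ v ∈ V, IsShuffle u v w }

/-- The `n`-fold shuffle of a language with itself (`0`-fold is `{ε}`). -/
def Language.shufflePow {α : Type*} (L : Language α) : ℕ → Language α
  | 0 => 1
  | n + 1 => (L.shufflePow n).shuffle L

/-- Iterated shuffle (shuffle closure): `L^{⧢,*} = ⋃_{n ≥ 0} L^{⧢,n}`. -/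
def Language.shuffleStar {α : Type*} (L : Language α) : Language α :=
  { w | ∃ n, w ∈ L.shufflePow n }

/-- Commutative (permutation) closure: all words with the same letter counts
as some word of `L`. -/
def Language.perm {α : Type*} [DecidableEq α] (L : Language α) : Language α :=
  { u | ∃ w ∈ L, ∀ a : α, u.count a = w.count a }

instance {α : Type*} : Union (Language α) := ⟨fun U V => { w | w ∈ U ∨ w ∈ V }⟩
instance {α : Type*} : Inter (Language α) := ⟨fun U V => { w | w ∈ U ∧ w ∈ V }⟩
instance {α : Type*} : EmptyCollection (Language α) := ⟨{ w | False }⟩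

theorem IsShuffle.comm {α : Type*} {u v w : List α} (h : IsShuffle u v w) :
    IsShuffle v u w := by
  induction h with
  | nil => exact .nil
  | left _ ih => exact .right ih
  | right _ ih => exact .left ih

theorem IsShuffle.nil_right {α : Type*} {u w : List α} (h : IsShuffle u [] w) : w = u := by
  generalize hv : ([] : List α) = v at h
  induction h with
  | nil => rfl
  | left _ ih => rw [ih hv]
  | right _ _ => cases hv

theorem IsShuffle.assoc {α : Type*} {a b x c w : List α}
    (h1 : IsShuffle a b x) (h2 : IsShuffle x c w) :
    ∃ y, IsShuffle b c y ∧ IsShuffle a y w := by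
  induction h2 generalizing a b with
  | nil => cases h1; exact ⟨[], .nil, .nil⟩
  | left _ ih =>
    cases h1 with
    | left h1 => obtain ⟨y, hy1, hy2⟩ := ih h1; exact ⟨y, hy1, .left hy2⟩
    | right h1 => obtain ⟨y, hy1, hy2⟩ := ih h1; exact ⟨_ :: y, .left hy1, .right hy2⟩
  | right _ ih =>
    obtain ⟨y, hy1, hy2⟩ := ih h1
    exact ⟨_ :: y, .right hy1, .right hy2⟩

theorem shufflePow_mono {α : Type*} {L M : Language α} (h : L ≤ M) (n : ℕ) :
    L.shufflePow n ≤ M.shufflePow n := by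
  induction n with
  | zero => exact le_refl _
  | succ n ih =>
    rintro w ⟨u, hu, v, hv, hs⟩
    exact ⟨u, ih hu, v, h hv, hs⟩

theorem shufflePow_add {α : Type*} {L : Language α} {m k : ℕ} {u v w : List α}
    (hu : u ∈ L.shufflePow m) (hv : v ∈ L.shufflePow k) (hs : IsShuffle u v w) :
    w ∈ L.shufflePow (m + k) := by
  induction k generalizing v w with
  | zero =>
    have : v = [] := hv
    subst this
    rw [hs.nil_right]
    exact hu
  | succ k ih =>
    obtain ⟨p, hp, q, hq, hpq⟩ := hv
    obtain ⟨y, hy1, hy2⟩ := IsShuffle.assoc hpq.comm hs.comm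
    exact ⟨y, ih hp hy1.comm, q, hq, hy2.comm⟩

theorem shuffleStar_union {α : Type*} (U V : Language α) :
    (U ∪ V).shuffleStar = U.shuffleStar.shuffle V.shuffleStar := by
  ext w
  constructor
  · rintro ⟨n, hn⟩
    induction n generalizing w with
    | zero =>
      exact ⟨[], ⟨0, rfl⟩, [], ⟨0, rfl⟩, hn ▸ .nil⟩
    | succ n ih =>
      obtain ⟨x, hx, y, hy, hs⟩ := hn
      obtain ⟨u, ⟨m, hu⟩, v, ⟨k, hv⟩, huv⟩ := ih _ hx
      cases hy with
      | inl hy =>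
        obtain ⟨z, hz1, hz2⟩ := IsShuffle.assoc huv.comm hs
        exact ⟨z, ⟨m + 1, u, hu, y, hy, hz1⟩, v, ⟨k, hv⟩, hz2.comm⟩
      | inr hy =>
        obtain ⟨z, hz1, hz2⟩ := IsShuffle.assoc huv hs
        exact ⟨u, ⟨m, hu⟩, z, ⟨k + 1, v, hv, y, hy, hz1⟩, hz2⟩
  · rintro ⟨u, ⟨m, hu⟩, v, ⟨k, hv⟩, hs⟩
    refine ⟨m + k, shufflePow_add ?_ ?_ hs⟩
    · exact shufflePow_mono (fun _ h => Or.inl h) m hu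
    · exact shufflePow_mono (fun _ h => Or.inr h) k hv
end

section
/- The map perm : P(Σ*) → P(Σ*) satisfies perm(U ∪ V) = perm(U) ∪ perm(V), perm(U·V) = perm(U) ⧢ perm(V), perm(∅) = ∅ and perm({ε}) = {ε}; i.e., perm is a semiring morphism from (P(Σ*), ∪, ·, ∅, {ε}) to (P(Σ*), ∪, ⧢, ∅, {ε}). -/
lemma IsShuffle.count {α : Type*} [DecidableEq α] {u v w : List α}
    (h : IsShuffle u v w) : ∀ a, w.count a = u.count a + v.count a := by
  induction h with
  | nil => simp
  | left _ ih => intro a; simp [List.count_cons, ih a]; omega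
  | right _ ih => intro a; simp [List.count_cons, ih a]; omega

lemma exists_shuffle_of_count {α : Type*} [DecidableEq α] :
    ∀ (w x y : List α), (∀ a, w.count a = x.count a + y.count a) →
    ∃ u v, IsShuffle u v w ∧ (∀ a, u.count a = x.count a) ∧
      (∀ a, v.count a = y.count a) := by
  intro w
  induction w with
  | nil =>
    intro x y h
    have hx : x = [] := List.eq_nil_iff_forall_not_mem.2 (fun a ha => by
      have h1 := h a; have h2 := List.count_pos_iff.2 ha; simp at h1; omega)
    have hy : y = [] := List.eq_nil_iff_forall_not_mem.2 (fun a ha => by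
      have h1 := h a; have h2 := List.count_pos_iff.2 ha; simp at h1; omega)
    subst hx hy
    exact ⟨[], [], IsShuffle.nil, fun _ => rfl, fun _ => rfl⟩
  | cons a w' ih =>
    intro x y h
    by_cases hax : a ∈ x
    · have hx1 : 1 ≤ x.count a := List.count_pos_iff.2 hax
      have h' : ∀ b, w'.count b = (x.erase a).count b + y.count b := by
        intro b
        have := h b
        rw [List.count_erase]
        by_cases hba : a = b
        · subst hba; simp [List.count_cons] at this ⊢; omega
        · simp [List.count_cons, hba, Ne.symm hba] at this ⊢; omega
      obtain ⟨u, v, hs, hu, hv⟩ := ih (x.erase a) y h'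
      refine ⟨a :: u, v, IsShuffle.left hs, ?_, hv⟩
      intro b
      have := hu b
      rw [List.count_erase] at this
      by_cases hba : a = b
      · subst hba; simp [List.count_cons, this]; omega
      · simp [List.count_cons, Ne.symm hba, this, hba]
    · have hx0 : x.count a = 0 := List.count_eq_zero.2 hax
      have hy1 : 1 ≤ y.count a := by
        have := h a; simp [List.count_cons] at this; omega
      have hay : a ∈ y := List.count_pos_iff.1 hy1
      have h' : ∀ b, w'.count b = x.count b + (y.erase a).count b := by
        intro b
        have := h b
        rw [List.count_erase]
        by_cases hba : a = b
        · subst hba; simp [List.count_cons] at this ⊢; omega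
        · simp [List.count_cons, hba, Ne.symm hba] at this ⊢; omega
      obtain ⟨u, v, hs, hu, hv⟩ := ih x (y.erase a) h'
      refine ⟨u, a :: v, IsShuffle.right hs, hu, ?_⟩
      intro b
      have := hv b
      rw [List.count_erase] at this
      by_cases hba : a = b
      · subst hba; simp [List.count_cons, this]; omega
      · simp [List.count_cons, Ne.symm hba, this, hba]

theorem perm_semiring_morphism {α : Type*} [DecidableEq α] :
    (∀ U V : Language α, (U ∪ V).perm = U.perm ∪ V.perm) ∧
    (∀ U V : Language α, (U * V).perm = U.perm.shuffle V.perm) ∧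
    (∅ : Language α).perm = ∅ ∧
    (1 : Language α).perm = 1 := by
  refine ⟨?_, ?_, ?_, ?_⟩
  · intro U V
    ext w
    constructor
    · rintro ⟨z, hz | hz, hc⟩
      · exact Or.inl ⟨z, hz, hc⟩
      · exact Or.inr ⟨z, hz, hc⟩
    · rintro (⟨z, hz, hc⟩ | ⟨z, hz, hc⟩)
      · exact ⟨z, Or.inl hz, hc⟩
      · exact ⟨z, Or.inr hz, hc⟩
  · intro U V
    ext w
    constructor
    · rintro ⟨z, hz, hc⟩
      obtain ⟨x, hx, y, hy, rfl⟩ := hz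
      obtain ⟨u, v, hs, hu, hv⟩ := exists_shuffle_of_count w x y (by
        intro a; rw [hc a, List.count_append])
      exact ⟨u, ⟨x, hx, hu⟩, v, ⟨y, hy, hv⟩, hs⟩
    · rintro ⟨u, ⟨x, hx, hu⟩, v, ⟨y, hy, hv⟩, hs⟩
      refine ⟨x ++ y, ⟨x, hx, y, hy, rfl⟩, ?_⟩
      intro a
      rw [hs.count a, List.count_append, hu a, hv a]
  · ext w
    constructor
    · rintro ⟨z, hz, -⟩; exact hz
    · rintro ⟨⟩
  · ext w
    constructor
    · rintro ⟨z, hz, hc⟩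
      rw [Language.mem_one] at hz
      subst hz
      have : w = [] := List.eq_nil_iff_forall_not_mem.2 (fun a ha => by
        have h1 := hc a; have h2 := List.count_pos_iff.2 ha; simp at h1; omega)
      simp [this, Language.mem_one]
    · intro hw
      rw [Language.mem_one] at hw
      subst hw
      exact ⟨[], rfl, fun _ => rfl⟩
end

section
/- Let u ∈ Σ* and L ⊆ Σ* be a finite language. Then perm(u) ⧢ perm(L)^{⧢,*} is regular if and only if for every letter a ∈ Σ occurring in some word of L, we have a⁺ ∩ L ≠ ∅. -/
namespace ShAux

variable {α : Type*} [DecidableEq α]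

lemma count_of_isShuffle {u v w : List α} (h : IsShuffle u v w) (a : α) :
    w.count a = u.count a + v.count a := by
  induction h with
  | nil => simp
  | @left b u v w h ih => simp only [List.count_cons, ih]; omega
  | @right b u v w h ih => simp only [List.count_cons, ih]; omega

lemma eq_nil_of_count {l : List α} (h : ∀ a, l.count a = 0) : l = [] := by
  cases l with
  | nil => rfl
  | cons a t => have := h a; simp [List.count_cons] at this

lemma exists_shuffle {w : List α} : ∀ u v : List α,
    (∀ a, w.count a = u.count a + v.count a) →
    ∃ u' v', (∀ a, u'.count a = u.count a) ∧ (∀ a, v'.count a = v.count a) ∧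
      IsShuffle u' v' w := by
  induction w with
  | nil =>
    intro u v h
    have hu : u = [] := eq_nil_of_count fun a => by have := h a; simp at this; omega
    have hv : v = [] := eq_nil_of_count fun a => by have := h a; simp at this; omega
    subst hu hv
    exact ⟨[], [], fun _ => rfl, fun _ => rfl, IsShuffle.nil⟩
  | cons x w ih =>
    intro u v h
    have hx := h x
    simp only [List.count_cons_self] at hx
    by_cases hu : 0 < u.count x
    · obtain ⟨u'', v'', h1, h2, hs⟩ := ih (u.erase x) v (fun a => by
        have h3 := h a
        have h4 : (u.erase x).count a = u.count a - if x = a then 1 else 0 := by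
          rw [List.count_erase]; simp
        simp only [List.count_cons] at h3
        by_cases hax : a = x
        · subst hax; simp at h3 h4 ⊢; omega
        · simp [hax, Ne.symm hax] at h3 h4 ⊢; omega)
      refine ⟨x :: u'', v'', fun a => ?_, h2, IsShuffle.left hs⟩
      have h4 : (u.erase x).count a = u.count a - if x = a then 1 else 0 := by
        rw [List.count_erase]; simp
      simp only [List.count_cons, h1, h4]
      by_cases hax : a = x
      · subst hax; simp; omega
      · simp [hax, Ne.symm hax]
    · have hv : 0 < v.count x := by omega
      obtain ⟨u'', v'', h1, h2, hs⟩ := ih u (v.erase x) (fun a => by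
        have h3 := h a
        have h4 : (v.erase x).count a = v.count a - if x = a then 1 else 0 := by
          rw [List.count_erase]; simp
        simp only [List.count_cons] at h3
        by_cases hax : a = x
        · subst hax; simp at h3 h4 ⊢; omega
        · simp [hax, Ne.symm hax] at h3 h4 ⊢; omega)
      refine ⟨u'', x :: v'', h1, fun a => ?_, IsShuffle.right hs⟩
      have h4 : (v.erase x).count a = v.count a - if x = a then 1 else 0 := by
        rw [List.count_erase]; simp
      simp only [List.count_cons, h2, h4]
      by_cases hax : a = x
      · subst hax; simp; omega
      · simp [hax, Ne.symm hax]

end ShAux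

namespace ShAux

variable {α : Type*} [DecidableEq α]

/-- sum of counts of `a` over a list of words -/
def csum (l : List (List α)) (a : α) : ℕ := (l.map (fun x => x.count a)).sum

@[simp] lemma csum_nil (a : α) : csum ([] : List (List α)) a = 0 := rfl

@[simp] lemma csum_cons (x : List α) (l : List (List α)) (a : α) :
    csum (x :: l) a = x.count a + csum l a := by simp [csum]

@[simp] lemma csum_append (l l' : List (List α)) (a : α) :
    csum (l ++ l') a = csum l a + csum l' a := by simp [csum]

lemma csum_perm {l l' : List (List α)} (h : l.Perm l') (a : α) :
    csum l a = csum l' a := (h.map _).sum_eq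

lemma count_flatten (l : List (List α)) (a : α) :
    l.flatten.count a = csum l a := by
  induction l with
  | nil => simp
  | cons x l ih => simp [List.count_append, ih]

@[simp] lemma csum_replicate (n : ℕ) (x : List α) (a : α) :
    csum (List.replicate n x) a = n * x.count a := by
  simp [csum, List.map_replicate, List.sum_replicate, smul_eq_mul]

lemma pow_to_list {L : Language α} : ∀ (n : ℕ) (w : List α), w ∈ L.perm.shufflePow n →
    ∃ l : List (List α), (∀ x ∈ l, x ∈ L) ∧ ∀ a, w.count a = csum l a := by
  intro n
  induction n with
  | zero =>
    intro w hw
    have : w = [] := (Language.mem_one w).mp hw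
    exact ⟨[], by simp, by simp [this]⟩
  | succ n ih =>
    intro w hw
    obtain ⟨p, hp, q, ⟨x, hx, hqx⟩, hs⟩ := hw
    obtain ⟨l, hl, hpl⟩ := ih p hp
    refine ⟨x :: l, by simpa using ⟨hx, hl⟩, fun a => ?_⟩
    rw [count_of_isShuffle hs, hpl, hqx]
    simp [Nat.add_comm]

lemma list_to_pow {L : Language α} : ∀ (l : List (List α)) (w : List α),
    (∀ x ∈ l, x ∈ L) → (∀ a, w.count a = csum l a) →
    w ∈ L.perm.shufflePow l.length := by
  intro l
  induction l with
  | nil =>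
    intro w _ hc
    have : w = [] := eq_nil_of_count fun a => by simpa using hc a
    exact (Language.mem_one w).mpr this
  | cons x l ih =>
    intro w hmem hc
    obtain ⟨p, q, hp, hq, hs⟩ := exists_shuffle l.flatten x (fun a => by
      rw [hc a, count_flatten]; simp [Nat.add_comm])
    have hpmem : p ∈ L.perm.shufflePow l.length :=
      ih p (fun y hy => hmem y (by simp [hy])) (fun a => by rw [hp a, count_flatten])
    exact ⟨p, hpmem, q, ⟨x, hmem x (by simp), hq⟩, hs⟩

/-- Membership predicate via Parikh counts -/
def TM (L : Language α) (u : List α) (v : α → ℕ) : Prop :=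
  ∃ l : List (List α), (∀ x ∈ l, x ∈ L) ∧ ∀ a, v a = u.count a + csum l a

lemma mem_M_iff {L : Language α} {u w : List α} :
    w ∈ (({u} : Language α).perm).shuffle L.perm.shuffleStar ↔
      TM L u (fun a => w.count a) := by
  constructor
  · rintro ⟨p, ⟨u', hu', hpu⟩, q, ⟨n, hq⟩, hs⟩
    have hu'' : u' = u := hu'
    subst hu''
    obtain ⟨l, hl, hql⟩ := pow_to_list n q hq
    exact ⟨l, hl, fun a => by show w.count a = _; rw [count_of_isShuffle hs, hpu, hql]⟩
  · rintro ⟨l, hl, hc⟩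
    have hc' : ∀ a, w.count a = u.count a + csum l a := hc
    obtain ⟨p, q, hp, hq, hs⟩ := exists_shuffle u l.flatten (fun a => by
      rw [hc' a, count_flatten])
    exact ⟨p, ⟨u, rfl, hp⟩, q, ⟨l.length, list_to_pow l q hl
      (fun a => by rw [hq a, count_flatten])⟩, hs⟩

end ShAux

namespace ShAux

variable {α : Type*} [DecidableEq α] [Fintype α]

lemma word_bound {L : Language α} {Cmax : ℕ} (hC : ∀ x ∈ L, x.length ≤ Cmax)
    {a : α} (hno : ∀ w ∈ L, a ∈ w → ∃ b ∈ w, b ≠ a) {x : List α} (hx : x ∈ L) :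
    x.count a ≤ Cmax * ∑ c ∈ Finset.univ.erase a, x.count c := by
  by_cases hax : a ∈ x
  · obtain ⟨b, hb, hba⟩ := hno x hx hax
    have h1 : x.count a ≤ Cmax := le_trans (List.count_le_length) (hC x hx)
    have h2 : 1 ≤ ∑ c ∈ Finset.univ.erase a, x.count c := by
      have hb1 : 1 ≤ x.count b := List.count_pos_iff.mpr hb
      exact le_trans hb1 (Finset.single_le_sum (f := fun c => x.count c)
        (fun _ _ => Nat.zero_le _) (by simp [hba]))
    calc x.count a ≤ Cmax * 1 := by omega
    _ ≤ _ := Nat.mul_le_mul_left _ h2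
  · simp [List.count_eq_zero_of_not_mem hax]

lemma TM_bound {L : Language α} {u : List α} {Cmax : ℕ} (hC : ∀ x ∈ L, x.length ≤ Cmax)
    {a : α} (hno : ¬ ∃ w ∈ L, w ≠ [] ∧ ∀ x ∈ w, x = a) {v : α → ℕ} (hv : TM L u v) :
    v a ≤ u.count a + Cmax * ∑ c ∈ Finset.univ.erase a, v c := by
  push_neg at hno
  have hno' : ∀ w ∈ L, a ∈ w → ∃ b ∈ w, b ≠ a := fun w hw haw =>
    hno w hw (by rintro rfl; simp at haw)
  obtain ⟨l, hl, hc⟩ := hv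
  have key : ∀ l' : List (List α), (∀ x ∈ l', x ∈ L) →
      csum l' a ≤ Cmax * ∑ c ∈ Finset.univ.erase a, csum l' c := by
    intro l' hl'
    induction l' with
    | nil => simp
    | cons x t ih =>
      have hx := word_bound hC hno' (hl' x (by simp))
      have ht := ih (fun y hy => hl' y (by simp [hy]))
      simp only [csum_cons, Finset.sum_add_distrib, Nat.mul_add]
      omega
  have h2 := key l hl
  have h3 : ∑ c ∈ Finset.univ.erase a, csum l c ≤ ∑ c ∈ Finset.univ.erase a, v c :=
    Finset.sum_le_sum (fun c _ => by rw [hc c]; omega)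
  have h4 := hc a
  have h5 := Nat.mul_le_mul_left Cmax h3
  omega

lemma not_regular {L : Language α} {u : List α} {a : α} {Cmax : ℕ}
    (hC : ∀ x ∈ L, x.length ≤ Cmax)
    {w₀ : List α} (hw₀ : w₀ ∈ L) (haw₀ : a ∈ w₀)
    (hno : ¬ ∃ w ∈ L, w ≠ [] ∧ ∀ x ∈ w, x = a) :
    ¬ ((({u} : Language α).perm).shuffle L.perm.shuffleStar).IsRegular := by
  rintro ⟨σ, fσ, M, hacc⟩
  set n := Fintype.card σ with hn
  set z := u ++ (List.replicate n w₀).flatten with hz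
  have hzc : ∀ c, z.count c = u.count c + n * w₀.count c := by
    intro c; rw [hz, List.count_append, count_flatten, csum_replicate]
  have hza : n ≤ z.count a := by
    have h1 : 1 ≤ w₀.count a := List.count_pos_iff.mpr haw₀
    have := hzc a
    have : n * 1 ≤ n * w₀.count a := Nat.mul_le_mul_left _ h1
    omega
  set x := List.replicate (z.count a) a ++ z.filter (fun c => !(c == a)) with hxdef
  have hxc : ∀ c, x.count c = z.count c := by
    intro c
    rw [hxdef, List.count_append]
    by_cases hca : c = a
    · subst hca
      have h0 : c ∉ z.filter (fun d => !(d == c)) := by simp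
      rw [List.count_eq_zero_of_not_mem h0, List.count_replicate]
      simp
    · rw [List.count_filter (by simp [Ne.symm]; exact fun h => (hca h).elim), List.count_replicate]
      simp [hca]
      intro h; exact (hca h.symm).elim
  have hxM : x ∈ M.accepts := by
    rw [hacc]
    apply mem_M_iff.mpr
    refine ⟨List.replicate n w₀, fun y hy => by rw [List.eq_of_mem_replicate hy]; exact hw₀,
      fun c => ?_⟩
    show x.count c = _
    rw [hxc, hzc, csum_replicate]
  have hxlen : n ≤ x.length := by
    rw [hxdef]
    calc n ≤ z.count a := hza
    _ ≤ _ := by simp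
  obtain ⟨A, b, C, hxeq, hABlen, hbne, hpump⟩ := M.pumping_lemma hxM hxlen
  have hAb : A ++ b = List.replicate (A.length + b.length) a := by
    have h1 : A ++ b = x.take (A.length + b.length) := by
      rw [hxeq]
      rw [show A ++ b ++ C = (A ++ b) ++ C from rfl]
      rw [← List.length_append, List.take_left]
    rw [h1, hxdef, List.take_append_of_le_length (by simpa using le_trans hABlen hza),
      List.take_replicate]
    congr 1
    omega
  have hball : ∀ c ∈ b, c = a := fun c hc =>
    List.eq_of_mem_replicate (hAb ▸ (List.mem_append_right A hc))
  have hbrep : b = List.replicate b.length a := List.eq_replicate_iff.mpr ⟨rfl, hball⟩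
  -- counts in x
  have hxsplit : ∀ c, x.count c = A.count c + b.count c + C.count c := by
    intro c; rw [hxeq]; simp [List.count_append]; omega
  set R := ∑ c ∈ Finset.univ.erase a, x.count c with hR
  set i := u.count a + Cmax * R + 1 with hi
  set y := A ++ (List.replicate i b).flatten ++ C with hy
  have hyM : y ∈ M.accepts := by
    apply hpump
    refine Language.mem_mul.mpr ⟨A ++ (List.replicate i b).flatten,
      Language.mem_mul.mpr ⟨A, rfl, (List.replicate i b).flatten,
        Language.mem_kstar.mpr ⟨List.replicate i b, rfl,
          fun s hs => List.eq_of_mem_replicate hs⟩, rfl⟩, C, rfl, rfl⟩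
  have hyc : ∀ c, y.count c = A.count c + i * b.count c + C.count c := by
    intro c; rw [hy]; simp [List.count_append, count_flatten, csum_replicate]; omega
  have hyTM : TM L u (fun c => y.count c) := mem_M_iff.mp (hacc ▸ hyM)
  have hbound := TM_bound hC hno hyTM
  -- evaluate bound
  have hbcc : ∀ c, c ≠ a → b.count c = 0 := by
    intro c hca
    rw [hbrep, List.count_replicate, if_neg (by simpa using Ne.symm hca)]
  have hyeqx : ∀ c, c ≠ a → y.count c = x.count c := by
    intro c hca; rw [hyc, hxsplit, hbcc c hca]; omega
  have hsum_eq : ∑ c ∈ Finset.univ.erase a, (fun c => y.count c) c = R := by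
    rw [hR]
    exact Finset.sum_congr rfl (fun c hc => hyeqx c (Finset.ne_of_mem_erase hc))
  have hba : 1 ≤ b.count a := by
    rw [hbrep, List.count_replicate, if_pos (by simp)]
    exact List.length_pos_iff.mpr hbne
  have hylarge : i ≤ y.count a := by
    rw [hyc]
    have : i * 1 ≤ i * b.count a := Nat.mul_le_mul_left _ hba
    omega
  rw [hsum_eq] at hbound
  omega

end ShAux

namespace ShAux

variable {α : Type*} [DecidableEq α]

lemma TM_add {L : Language α} {u : List α} {v : α → ℕ} (hv : TM L u v) {a : α} {w : List α}
    (hw : w ∈ L) (hall : ∀ x ∈ w, x = a) {m : ℕ} (hd : w.length ∣ m) :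
    TM L u (fun c => if c = a then v c + m else v c) := by
  obtain ⟨l, hl, hc⟩ := hv
  have hwrep : w = List.replicate w.length a := List.eq_replicate_iff.mpr ⟨rfl, hall⟩
  have hwc : ∀ c, w.count c = if c = a then w.length else 0 := by
    intro c
    calc w.count c = (List.replicate w.length a).count c := by rw [← hwrep]
    _ = _ := by
      rw [List.count_replicate]
      by_cases h : c = a
      · subst h; simp
      · rw [if_neg (by simpa using Ne.symm h), if_neg h]
  refine ⟨l ++ List.replicate (m / w.length) w, ?_, fun c => ?_⟩
  · intro x hx
    rcases List.mem_append.mp hx with h | h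
    · exact hl x h
    · rw [List.eq_of_mem_replicate h]; exact hw
  · rw [csum_append, csum_replicate, hwc c]
    by_cases hca : c = a
    · simp only [if_pos hca]
      rw [Nat.div_mul_cancel hd, hc c]; omega
    · simp only [if_neg hca]
      rw [hc c]; omega

lemma list_pigeonhole {β : Type*} [DecidableEq β] {F ls : List β} {m : ℕ} (hm : 0 < m)
    (hF : F ≠ []) (hsub : ∀ x ∈ F, x ∈ ls) (hlen : ls.length * m ≤ F.length) :
    ∃ w ∈ F, m ≤ (F.filter (fun x => decide (x = w))).length := by
  have key : ∃ w ∈ F, m ≤ F.count w := by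
    by_contra hcon
    push_neg at hcon
    obtain ⟨q, rfl⟩ : ∃ q, m = q + 1 := ⟨m - 1, by omega⟩
    have h1 : F.length = ∑ b ∈ F.toFinset, F.count b := (List.sum_toFinset_count_eq_length F).symm
    have h2 : ∀ b ∈ F.toFinset, F.count b ≤ q := fun b hb => by
      have := hcon b (List.mem_toFinset.mp hb); omega
    have h3 : F.length ≤ F.toFinset.card * q := by
      have h3' := Finset.sum_le_card_nsmul F.toFinset (fun b => F.count b) q h2
      rw [smul_eq_mul] at h3'
      rw [h1]
      exact h3'
    have h4 : F.toFinset.card ≤ ls.length := le_trans (Finset.card_le_card (fun b hb =>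
      List.mem_toFinset.mpr (hsub b (List.mem_toFinset.mp hb)))) (List.toFinset_card_le ls)
    have h5 : 0 < ls.length := by
      obtain ⟨x, hx⟩ := List.exists_mem_of_ne_nil F hF
      exact List.length_pos_iff.mpr (List.ne_nil_of_mem (hsub x hx))
    have h6 : F.length ≤ ls.length * q := le_trans h3 (Nat.mul_le_mul_right _ h4)
    have h7 : ls.length * (q + 1) = ls.length * q + ls.length := by ring
    omega
  obtain ⟨w, hw, hcnt⟩ := key
  exact ⟨w, hw, by rwa [List.count_eq_countP, List.countP_eq_length_filter] at hcnt⟩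

lemma extract : ∀ (l : List (List α)) (t : ℕ) (w : List α),
    t ≤ (l.filter (fun x => decide (x = w))).length →
    ∃ r : List (List α), (∀ x ∈ r, x ∈ l) ∧ ∀ a, csum l a = t * w.count a + csum r a := by
  intro l
  induction l with
  | nil =>
    intro t w h
    simp at h
    exact ⟨[], by simp, fun a => by simp [h]⟩
  | cons x l ih =>
    intro t w h
    match t with
    | 0 => exact ⟨x :: l, fun y hy => hy, fun a => by simp⟩
    | t + 1 =>
      by_cases hxw : x = w
      · subst hxw
        have h' : t ≤ (l.filter (fun y => decide (y = x))).length := by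
          rw [List.filter_cons] at h
          simp at h
          omega
        obtain ⟨r, hr, hc⟩ := ih t x h'
        refine ⟨r, fun y hy => List.mem_cons_of_mem _ (hr y hy), fun a => ?_⟩
        rw [csum_cons, hc a, Nat.succ_mul]
        omega
      · have h' : t + 1 ≤ (l.filter (fun y => decide (y = w))).length := by
          rw [List.filter_cons] at h
          simp only [decide_eq_true_eq] at h ⊢
          rw [if_neg (by simpa using hxw)] at h
          exact h
        obtain ⟨r, hr, hc⟩ := ih (t + 1) w h'
        refine ⟨x :: r, fun y hy => ?_, fun a => by rw [csum_cons, csum_cons, hc a]; omega⟩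
        rcases List.mem_cons.mp hy with rfl | hy2
        · exact List.mem_cons_self
        · exact List.mem_cons_of_mem _ (hr y hy2)

lemma csum_filter_mem (l : List (List α)) (a : α) :
    csum (l.filter (fun x => decide (a ∈ x))) a = csum l a := by
  induction l with
  | nil => simp
  | cons x t ih =>
    by_cases h : a ∈ x
    · simp [List.filter_cons, h, ih]
    · simp [List.filter_cons, h, ih, List.count_eq_zero_of_not_mem h]

lemma csum_le_mul {l : List (List α)} {a : α} {Cmax : ℕ} (h : ∀ x ∈ l, x.count a ≤ Cmax) :
    csum l a ≤ l.length * Cmax := by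
  induction l with
  | nil => simp
  | cons x t ih =>
    have h1 := h x (by simp)
    have h2 := ih (fun y hy => h y (by simp [hy]))
    simp only [csum_cons, List.length_cons, Nat.succ_mul]
    omega

lemma csum_flatMap {β : Type*} (lst : List β) (g : β → List (List α)) (c : α) :
    csum (lst.flatMap g) c = (lst.map (fun b => csum (g b) c)).sum := by
  induction lst with
  | nil => simp [csum]
  | cons b t ih => simp only [List.flatMap_cons, csum_append, List.map_cons, List.sum_cons, ih]

lemma exists_pos_of_csum_pos : ∀ {l : List (List α)} {a : α}, 0 < csum l a → ∃ x ∈ l, a ∈ x := by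
  intro l
  induction l with
  | nil => intro a h; simp at h
  | cons x t ih =>
    intro a h
    rw [csum_cons] at h
    by_cases hx : 0 < x.count a
    · exact ⟨x, by simp, List.count_pos_iff.mp hx⟩
    · obtain ⟨y, hy, hay⟩ := ih (a := a) (by omega)
      exact ⟨y, by simp [hy], hay⟩

lemma TM_relevant {L : Language α} {u : List α} {v : α → ℕ} (hv : TM L u v) {a : α}
    (h : u.count a < v a) : ∃ w ∈ L, a ∈ w := by
  obtain ⟨l, hl, hc⟩ := hv
  have hpos : 0 < csum l a := by have := hc a; omega
  obtain ⟨x, hx, hax⟩ := exists_pos_of_csum_pos hpos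
  exact ⟨x, hl x hx, hax⟩

lemma TM_sub {L : Language α} [Fintype α] {u : List α}
    (ls : List (List α)) (hls : ∀ x, x ∈ L ↔ x ∈ ls)
    (W : α → List α)
    (hW : ∀ b, (∃ w ∈ L, b ∈ w) → W b ∈ L ∧ W b ≠ [] ∧ W b = List.replicate (W b).length b)
    (hWe : ∀ b, W b ≠ [] → ∃ w ∈ L, b ∈ w)
    {Cmax : ℕ} (hC : ∀ x ∈ L, x.length ≤ Cmax)
    {m : ℕ} (hm : 0 < m) (hmd : ∀ d, 0 < d → d ≤ Cmax * Cmax → d ∣ m)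
    {v : α → ℕ} (hv : TM L u v) (a : α)
    (hN : u.count a + ls.length * m * Cmax + m ≤ v a) :
    TM L u (fun c => if c = a then v c - m else v c) := by
  obtain ⟨l, hl, hc⟩ := hv
  set F := l.filter (fun x => decide (a ∈ x)) with hF
  have hFl : ∀ x ∈ F, x ∈ l := fun x hx => List.mem_of_mem_filter hx
  have hcsF : csum F a = csum l a := csum_filter_mem l a
  have hclA : ls.length * m * Cmax + m ≤ csum l a := by have := hc a; omega
  have hFL : ∀ x ∈ F, x ∈ L := fun x hx => hl x (hFl x hx)
  have hFle : csum F a ≤ F.length * Cmax :=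
    csum_le_mul (fun x hx => le_trans (List.count_le_length) (hC x (hFL x hx)))
  have hCpos : 0 < Cmax := by
    rcases Nat.eq_zero_or_pos Cmax with h0 | h0
    · rw [h0, Nat.mul_zero] at hFle; omega
    · exact h0
  have hFlen : ls.length * m ≤ F.length := by
    have h1 : ls.length * m * Cmax ≤ F.length * Cmax := by omega
    exact Nat.le_of_mul_le_mul_right h1 hCpos
  have hFne : F ≠ [] := by
    intro h0; rw [h0] at hcsF; simp at hcsF; omega
  obtain ⟨w, hwF, hwmult⟩ := list_pigeonhole hm hFne (fun x hx => (hls x).mp (hFL x hx)) hFlen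
  have hwL : w ∈ L := hFL w hwF
  have haw : a ∈ w := by
    have := List.of_mem_filter hwF
    simpa using this
  have hca_pos : 0 < w.count a := List.count_pos_iff.mpr haw
  have hca_le : w.count a ≤ Cmax := le_trans (List.count_le_length) (hC w hwL)
  have hCC : Cmax ≤ Cmax * Cmax := Nat.le_mul_of_pos_left _ hCpos
  have hdvd_ca : w.count a ∣ m := hmd _ hca_pos (le_trans hca_le hCC)
  set t := m / w.count a with ht
  have htm : t * w.count a = m := Nat.div_mul_cancel hdvd_ca
  have htle : t ≤ m := Nat.div_le_self _ _
  have hsubl : (F.filter (fun x => decide (x = w))).length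
      ≤ (l.filter (fun x => decide (x = w))).length :=
    List.Sublist.length_le (List.Sublist.filter _ (List.filter_sublist (l := l)))
  have hcl : t ≤ (l.filter (fun x => decide (x = w))).length :=
    le_trans (le_trans htle hwmult) hsubl
  obtain ⟨r, hr, hrc⟩ := extract l t w hcl
  set rep := (Finset.univ : Finset α).toList.flatMap
    (fun b => if b = a then ([] : List (List α))
      else List.replicate (t * w.count b / (W b).length) (W b)) with hrep
  have hrepL : ∀ x ∈ rep, x ∈ L := by
    intro x hx
    rw [hrep] at hx
    obtain ⟨b, _, hxb⟩ := List.mem_flatMap.mp hx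
    by_cases hba : b = a
    · rw [if_pos hba] at hxb; simp at hxb
    · rw [if_neg hba] at hxb
      obtain ⟨hq, rfl⟩ := List.mem_replicate.mp hxb
      have hWb : W b ≠ [] := by
        intro h0
        rw [h0] at hq
        simp at hq
      exact (hW b (hWe b hWb)).1
  have hrepc : ∀ c, csum rep c = if c = a then 0 else t * w.count c := by
    intro c
    have hzero : ∀ b ∈ (Finset.univ : Finset α), b ≠ c →
        csum (if b = a then ([] : List (List α))
          else List.replicate (t * w.count b / (W b).length) (W b)) c = 0 := by
      intro b _ hbc
      by_cases hba : b = a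
      · simp [hba]
      · simp only [if_neg hba, csum_replicate]
        have : (W b).count c = 0 := by
          by_cases hWb : W b = []
          · rw [hWb]; simp
          · obtain ⟨_, _, hWrep⟩ := hW b (hWe b hWb)
            calc (W b).count c = (List.replicate (W b).length b).count c := by rw [← hWrep]
            _ = 0 := by rw [List.count_replicate, if_neg (by simpa using hbc)]
        rw [this, Nat.mul_zero]
    rw [hrep, csum_flatMap, Finset.sum_map_toList,
      Finset.sum_eq_single c hzero (fun h0 => absurd (Finset.mem_univ c) h0)]
    · by_cases hca : c = a
      · simp [hca]
      · simp only [if_neg hca, csum_replicate]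
        by_cases hwc : w.count c = 0
        · simp [hwc]
        · have hrel : ∃ w' ∈ L, c ∈ w' := ⟨w, hwL, List.count_pos_iff.mp (Nat.pos_of_ne_zero hwc)⟩
          obtain ⟨hWL, hWne, hWrep⟩ := hW c hrel
          have hK : (W c).count c = (W c).length := by
            calc (W c).count c = (List.replicate (W c).length c).count c := by rw [← hWrep]
            _ = (W c).length := by rw [List.count_replicate]; simp
          have hKpos : 0 < (W c).length := List.length_pos_iff.mpr hWne
          have hKle : (W c).length ≤ Cmax := hC _ hWL
          have hdvd2 : w.count a * (W c).length ∣ m :=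
            hmd _ (Nat.mul_pos hca_pos hKpos) (Nat.mul_le_mul hca_le hKle)
          obtain ⟨s, hs⟩ := hdvd2
          have htKs : t = (W c).length * s := by
            have h1 : ((W c).length * s) * w.count a = m := by rw [hs]; ring
            have h2 : t * w.count a = ((W c).length * s) * w.count a := by rw [htm, h1]
            exact Nat.eq_of_mul_eq_mul_right hca_pos h2
          have hdvd3 : (W c).length ∣ t * w.count c := ⟨s * w.count c, by rw [htKs]; ring⟩
          rw [hK, Nat.div_mul_cancel hdvd3]
  refine ⟨r ++ rep, ?_, fun c => ?_⟩
  · intro x hx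
    rcases List.mem_append.mp hx with h0 | h0
    · exact hl x (hr x h0)
    · exact hrepL x h0
  · show (if c = a then v c - m else v c) = u.count c + csum (r ++ rep) c
    rw [csum_append]
    have h1 := hrc c
    have h2 := hrepc c
    have h3 := hc c
    by_cases hca : c = a
    · rw [if_pos hca] at h2 ⊢
      rw [h2]
      have h5 : t * w.count c = m := by rw [hca]; exact htm
      omega
    · rw [if_neg hca] at h2 ⊢
      rw [h2]
      omega

end ShAux

namespace ShAux

variable {α : Type*} [DecidableEq α]

lemma TM_up {L : Language α} {u : List α}
    (hRHS : ∀ b : α, (∃ w ∈ L, b ∈ w) → ∃ w ∈ L, w ≠ [] ∧ ∀ x ∈ w, x = b)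
    {Cmax m : ℕ} (hC : ∀ x ∈ L, x.length ≤ Cmax)
    (hmd : ∀ d, 0 < d → d ≤ Cmax * Cmax → d ∣ m) :
    ∀ (j : ℕ) {v : α → ℕ}, TM L u v → ∀ a, u.count a < v a →
      TM L u (Function.update v a (v a + j * m)) := by
  intro j
  induction j with
  | zero =>
    intro v hv a _
    simpa [Function.update_eq_self] using hv
  | succ j ih =>
    intro v hv a hrel
    have h1 := ih hv a hrel
    obtain ⟨w, hwL, hwne, hall⟩ := hRHS a (TM_relevant hv hrel)
    have hlen_pos : 0 < w.length := List.length_pos_iff.mpr hwne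
    have hlen_le : w.length ≤ Cmax := hC w hwL
    have hCpos : 0 < Cmax := lt_of_lt_of_le hlen_pos hlen_le
    have hdvd : w.length ∣ m :=
      hmd _ hlen_pos (le_trans hlen_le (Nat.le_mul_of_pos_left _ hCpos))
    have h2 := TM_add h1 hwL hall hdvd
    have heq : (fun c => if c = a then (Function.update v a (v a + j * m)) c + m
        else (Function.update v a (v a + j * m)) c)
        = Function.update v a (v a + (j + 1) * m) := by
      funext c
      rcases eq_or_ne c a with rfl | hca
      · rw [if_pos rfl, Function.update_self, Function.update_self]
        ring
      · rw [if_neg hca, Function.update_of_ne hca, Function.update_of_ne hca]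
    rw [heq] at h2
    exact h2

lemma TM_down {L : Language α} [Fintype α] {u : List α}
    (ls : List (List α)) (hls : ∀ x, x ∈ L ↔ x ∈ ls)
    (W : α → List α)
    (hW : ∀ b, (∃ w ∈ L, b ∈ w) → W b ∈ L ∧ W b ≠ [] ∧ W b = List.replicate (W b).length b)
    (hWe : ∀ b, W b ≠ [] → ∃ w ∈ L, b ∈ w)
    {Cmax : ℕ} (hC : ∀ x ∈ L, x.length ≤ Cmax)
    {m : ℕ} (hm : 0 < m) (hmd : ∀ d, 0 < d → d ≤ Cmax * Cmax → d ∣ m) :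
    ∀ (j : ℕ) {v : α → ℕ}, TM L u v → ∀ (a : α) (x : ℕ), v a = x + j * m →
      u.length + ls.length * m * Cmax + m ≤ x → TM L u (Function.update v a x) := by
  intro j
  induction j with
  | zero =>
    intro v hv a x hx _
    have : x = v a := by omega
    subst this
    simpa [Function.update_eq_self] using hv
  | succ j ih =>
    intro v hv a x hx hxN
    have hsub := TM_sub ls hls W hW hWe hC hm hmd hv a (by
      have hcu : u.count a ≤ u.length := List.count_le_length
      have : (j + 1) * m = j * m + m := by ring
      omega)
    have heq : (fun c => if c = a then v c - m else v c)
        = Function.update v a (x + j * m) := by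
      funext c
      rcases eq_or_ne c a with rfl | hca
      · rw [if_pos rfl, Function.update_self]
        have hpm : (j + 1) * m = j * m + m := by ring
        omega
      · rw [if_neg hca, Function.update_of_ne hca]
    rw [heq] at hsub
    have h2 := ih hsub a x (by rw [Function.update_self]) hxN
    rwa [Function.update_idem] at h2

lemma TM_coord {L : Language α} [Fintype α] {u : List α}
    (hRHS : ∀ b : α, (∃ w ∈ L, b ∈ w) → ∃ w ∈ L, w ≠ [] ∧ ∀ x ∈ w, x = b)
    (ls : List (List α)) (hls : ∀ x, x ∈ L ↔ x ∈ ls)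
    (W : α → List α)
    (hW : ∀ b, (∃ w ∈ L, b ∈ w) → W b ∈ L ∧ W b ≠ [] ∧ W b = List.replicate (W b).length b)
    (hWe : ∀ b, W b ≠ [] → ∃ w ∈ L, b ∈ w)
    {Cmax : ℕ} (hC : ∀ x ∈ L, x.length ≤ Cmax)
    {m : ℕ} (hm : 0 < m) (hmd : ∀ d, 0 < d → d ≤ Cmax * Cmax → d ∣ m)
    {N : ℕ} (hNge : u.length + ls.length * m * Cmax + m ≤ N)
    {v : α → ℕ} (hv : TM L u v) (a : α) (y : ℕ)
    (hva : N ≤ v a) (hy : N ≤ y) (hmod : v a % m = y % m) :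
    TM L u (Function.update v a y) := by
  have hcu : u.count a ≤ u.length := List.count_le_length
  rcases le_total (v a) y with h | h
  · have hd : m ∣ y - v a := (Nat.modEq_iff_dvd' h).mp hmod
    obtain ⟨j, hj⟩ := hd
    have hy2 : y = v a + j * m := by rw [Nat.mul_comm]; omega
    rw [hy2]
    exact TM_up hRHS hC hmd j hv a (by omega)
  · have hd : m ∣ v a - y := (Nat.modEq_iff_dvd' h).mp hmod.symm
    obtain ⟨j, hj⟩ := hd
    exact TM_down ls hls W hW hWe hC hm hmd j hv a y (by rw [Nat.mul_comm]; omega) (by omega)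

lemma TM_invariance {L : Language α} [Fintype α] {u : List α}
    (hRHS : ∀ b : α, (∃ w ∈ L, b ∈ w) → ∃ w ∈ L, w ≠ [] ∧ ∀ x ∈ w, x = b)
    (ls : List (List α)) (hls : ∀ x, x ∈ L ↔ x ∈ ls)
    (W : α → List α)
    (hW : ∀ b, (∃ w ∈ L, b ∈ w) → W b ∈ L ∧ W b ≠ [] ∧ W b = List.replicate (W b).length b)
    (hWe : ∀ b, W b ≠ [] → ∃ w ∈ L, b ∈ w)
    {Cmax : ℕ} (hC : ∀ x ∈ L, x.length ≤ Cmax)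
    {m : ℕ} (hm : 0 < m) (hmd : ∀ d, 0 < d → d ≤ Cmax * Cmax → d ∣ m)
    {N : ℕ} (hNge : u.length + ls.length * m * Cmax + m ≤ N)
    {v v' : α → ℕ} (hv : TM L u v)
    (hvv : ∀ a, v a = v' a ∨ (N ≤ v a ∧ N ≤ v' a ∧ v a % m = v' a % m)) :
    TM L u v' := by
  have key : ∀ s : Finset α, TM L u (fun c => if c ∈ s then v' c else v c) := by
    intro s
    induction s using Finset.induction_on with
    | empty => simpa using hv
    | @insert a s ha ih =>
      have heq : (fun c => if c ∈ insert a s then v' c else v c)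
          = Function.update (fun c => if c ∈ s then v' c else v c) a (v' a) := by
        funext c
        by_cases hca : c = a
        · subst hca
          simp [Function.update_self]
        · simp only [Function.update_of_ne hca, Finset.mem_insert, hca, false_or]
      rw [heq]
      rcases hvv a with h | ⟨h1, h2, h3⟩
      · rw [show v' a = (fun c => if c ∈ s then v' c else v c) a by simp [ha, ← h],
          Function.update_eq_self]
        exact ih
      · exact TM_coord hRHS ls hls W hW hWe hC hm hmd hNge ih a (v' a)
          (by simpa [ha] using h1) h2 (by simpa [ha] using h3)
  have h := key Finset.univ
  have heq2 : (fun c => if c ∈ (Finset.univ : Finset α) then v' c else v c) = v' := by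
    funext c; simp
  rwa [heq2] at h

end ShAux

namespace ShAux

variable {α : Type*} [DecidableEq α]

def encF (N m : ℕ) (hm : 0 < m) : ℕ → Fin (N + m) := fun x =>
  if h : x < N then ⟨x, by omega⟩
  else ⟨N + (x - N) % m, by have := Nat.mod_lt (x - N) hm; omega⟩

def succF (N m : ℕ) (hm : 0 < m) : Fin (N + m) → Fin (N + m) := fun i =>
  if h : (i : ℕ) + 1 < N + m then ⟨(i : ℕ) + 1, h⟩ else ⟨N, by omega⟩

lemma encF_succ (N m : ℕ) (hm : 0 < m) (x : ℕ) :
    encF N m hm (x + 1) = succF N m hm (encF N m hm x) := by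
  unfold encF succF
  by_cases h1 : x + 1 < N
  · rw [dif_pos h1, dif_pos (by omega : x < N)]
    rw [dif_pos (by omega : x + 1 < N + m)]
  · rw [dif_neg h1]
    by_cases h2 : x < N
    · -- x = N - 1, x + 1 = N
      rw [dif_pos h2, dif_pos (by omega : x + 1 < N + m)]
      apply Fin.ext
      simp only
      have : x + 1 - N = 0 := by omega
      rw [this, Nat.zero_mod]
      omega
    · rw [dif_neg h2]
      have hr : (x - N) % m < m := Nat.mod_lt _ hm
      have hmod : (x + 1 - N) % m = ((x - N) % m + 1) % m := by
        have hx1 : x + 1 - N = (x - N) + 1 := by omega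
        rw [hx1, Nat.mod_add_mod]
      by_cases h3 : (x - N) % m + 1 < m
      · rw [dif_pos (by omega : N + (x - N) % m + 1 < N + m)]
        apply Fin.ext
        simp only
        rw [hmod, Nat.mod_eq_of_lt h3]
        omega
      · rw [dif_neg (by omega : ¬(N + (x - N) % m + 1 < N + m))]
        apply Fin.ext
        simp only
        have h4 : (x - N) % m + 1 = m := by omega
        rw [hmod, h4, Nat.mod_self]
        omega

lemma encF_eq_cases {N m : ℕ} {hm : 0 < m} {x y : ℕ}
    (h : encF N m hm x = encF N m hm y) :
    x = y ∨ (N ≤ x ∧ N ≤ y ∧ x % m = y % m) := by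
  have hval := congrArg Fin.val h
  unfold encF at hval
  by_cases hx : x < N <;> by_cases hy : y < N
  · rw [dif_pos hx, dif_pos hy] at hval
    exact Or.inl hval
  · rw [dif_pos hx, dif_neg hy] at hval
    simp only at hval
    omega
  · rw [dif_neg hx, dif_pos hy] at hval
    simp only at hval
    omega
  · rw [dif_neg hx, dif_neg hy] at hval
    simp only at hval
    have h1 : (x - N) % m = (y - N) % m := by omega
    refine Or.inr ⟨by omega, by omega, ?_⟩
    have hx2 : x % m = (N % m + (x - N) % m) % m := by
      conv_lhs => rw [show x = N + (x - N) by omega]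
      rw [Nat.add_mod]
    have hy2 : y % m = (N % m + (y - N) % m) % m := by
      conv_lhs => rw [show y = N + (y - N) by omega]
      rw [Nat.add_mod]
    rw [hx2, hy2, h1]

/-- The counting automaton. -/
def autom (N m : ℕ) (hm : 0 < m) (acc : Set (α → Fin (N + m))) :
    DFA α (α → Fin (N + m)) where
  step := fun s c => Function.update s c (succF N m hm (s c))
  start := fun _ => encF N m hm 0
  accept := acc

lemma autom_evalFrom (N m : ℕ) (hm : 0 < m) (acc : Set (α → Fin (N + m))) :
    ∀ (w p : List α),
      (autom N m hm acc).evalFrom (fun a => encF N m hm (p.count a)) w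
        = fun a => encF N m hm ((p ++ w).count a) := by
  intro w
  induction w with
  | nil => intro p; simp [DFA.evalFrom]
  | cons c w ih =>
    intro p
    have hstep : (autom N m hm acc).step (fun a => encF N m hm (p.count a)) c
        = fun a => encF N m hm ((p ++ [c]).count a) := by
      funext a
      show Function.update (fun a => encF N m hm (p.count a)) c
        (succF N m hm (encF N m hm (p.count c))) a = _
      rcases eq_or_ne a c with rfl | hac
      · rw [Function.update_self, ← encF_succ]
        congr 1
        simp [List.count_append]
      · rw [Function.update_of_ne hac]
        congr 1
        simp [List.count_append, List.count_singleton, hac, Ne.symm hac]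
    have hfold : (autom N m hm acc).evalFrom (fun a => encF N m hm (p.count a)) (c :: w)
        = (autom N m hm acc).evalFrom
            ((autom N m hm acc).step (fun a => encF N m hm (p.count a)) c) w := rfl
    rw [hfold, hstep, ih (p ++ [c])]
    funext a
    congr 1
    rw [List.append_assoc]
    rfl

lemma autom_eval (N m : ℕ) (hm : 0 < m) (acc : Set (α → Fin (N + m))) (w : List α) :
    (autom N m hm acc).eval w = fun a => encF N m hm (w.count a) := by
  show (autom N m hm acc).evalFrom (autom N m hm acc).start w = _
  have hstart : (autom N m hm acc).start = fun a => encF N m hm (([] : List α).count a) := by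
    funext a; simp [autom]
  rw [hstart, autom_evalFrom]
  simp

end ShAux

theorem perm_shuffle_perm_shuffleStar_regular_iff {α : Type*} [Fintype α]
    [DecidableEq α] (u : List α) (L : Language α) (hL : L.Finite) :
    ((({u} : Language α).perm).shuffle L.perm.shuffleStar).IsRegular ↔
      ∀ a : α, (∃ w ∈ L, a ∈ w) → ∃ w ∈ L, w ≠ [] ∧ ∀ x ∈ w, x = a := by
  classical
  have hls : ∀ x, x ∈ L ↔ x ∈ hL.toFinset.toList := fun x => by
    rw [Finset.mem_toList]; exact hL.mem_toFinset.symm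
  set ls := hL.toFinset.toList with hlsdef
  have hC0 : ∀ x ∈ L, x.length ≤ (ls.map List.length).sum := by
    intro x hx
    exact List.single_le_sum (fun _ _ => Nat.zero_le _) _
      (List.mem_map_of_mem ((hls x).mp hx))
  constructor
  · rintro hreg a ⟨w₀, hw₀, haw₀⟩
    by_contra hno
    exact ShAux.not_regular hC0 hw₀ haw₀ hno hreg
  · intro h
    set Cmax := (ls.map List.length).sum + 1 with hCdef
    have hC : ∀ x ∈ L, x.length ≤ Cmax := fun x hx => le_trans (hC0 x hx) (Nat.le_succ _)
    set m := Nat.factorial (Cmax * Cmax) with hmdef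
    have hm : 0 < m := Nat.factorial_pos _
    have hmd : ∀ d, 0 < d → d ≤ Cmax * Cmax → d ∣ m := fun d h1 h2 => Nat.dvd_factorial h1 h2
    have hWex : ∃ W : α → List α,
        (∀ b, (∃ w ∈ L, b ∈ w) → W b ∈ L ∧ W b ≠ [] ∧ W b = List.replicate (W b).length b) ∧
        (∀ b, W b ≠ [] → ∃ w ∈ L, b ∈ w) := by
      refine ⟨fun b => if hb : ∃ w ∈ L, b ∈ w then (h b hb).choose else [], ?_, ?_⟩
      · intro b hb
        dsimp only
        rw [dif_pos hb]
        obtain ⟨h1, h2, h3⟩ := (h b hb).choose_spec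
        exact ⟨h1, h2, List.eq_replicate_iff.mpr ⟨rfl, h3⟩⟩
      · intro b hb
        by_cases hbb : ∃ w ∈ L, b ∈ w
        · exact hbb
        · dsimp only at hb
          rw [dif_neg hbb] at hb
          exact absurd rfl hb
    obtain ⟨W, hW, hWe⟩ := hWex
    set N := u.length + ls.length * m * Cmax + m with hNdef
    have hNge : u.length + ls.length * m * Cmax + m ≤ N := le_of_eq hNdef.symm
    set acc : Set (α → Fin (N + m)) :=
      {s | ∃ v : α → ℕ, ShAux.TM L u v ∧ (fun a => ShAux.encF N m hm (v a)) = s} with haccdef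
    set g : (α → Fin (N + m)) ≃ (Fin (Fintype.card α) → Fin (N + m)) :=
      Equiv.arrowCongr (Fintype.equivFin α) (Equiv.refl _) with hgdef
    refine ⟨Fin (Fintype.card α) → Fin (N + m), inferInstance,
      DFA.reindex g (ShAux.autom N m hm acc), ?_⟩
    rw [DFA.accepts_reindex]
    ext w
    rw [DFA.mem_accepts, ShAux.autom_eval]
    show ((fun a => ShAux.encF N m hm (w.count a)) ∈ acc) ↔ _
    constructor
    · rintro ⟨v, hTM, hvs⟩
      apply ShAux.mem_M_iff.mpr
      refine ShAux.TM_invariance h ls hls W hW hWe hC hm hmd hNge hTM (fun a => ?_)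
      have ha := congrFun hvs a
      rcases ShAux.encF_eq_cases ha with h1 | ⟨h1, h2, h3⟩
      · exact Or.inl h1
      · exact Or.inr ⟨h1, h2, h3⟩
    · intro hw
      exact ⟨fun a => w.count a, ShAux.mem_M_iff.mp hw, rfl⟩
end

section
/- Let u ∈ Σ* and Γ ⊆ Σ. The iterated shuffle of perm(u) ⧢ Γ* is regular if and only if u ∈ a⁺ for some letter a ∈ Σ, or u ∈ Γ*, or u = ε. -/
section Aux

variable {α : Type*} [DecidableEq α]

private lemma count_of_isShuffle {x y w : List α} (h : IsShuffle x y w) :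
    ∀ a, w.count a = x.count a + y.count a := by
  induction h with
  | nil => simp
  | left h ih => intro a; simp only [List.count_cons, ih a]; omega
  | right h ih => intro a; simp only [List.count_cons, ih a]; omega

private lemma isShuffle_symm {x y w : List α} (h : IsShuffle x y w) : IsShuffle y x w := by
  induction h with
  | nil => exact .nil
  | left _ ih => exact .right ih
  | right _ ih => exact .left ih

private lemma isShuffle_nil_left (w : List α) : IsShuffle [] w w := by
  induction w with
  | nil => exact .nil
  | cons a w ih => exact .right ih

private lemma isShuffle_nil_right (w : List α) : IsShuffle w [] w :=
  isShuffle_symm (isShuffle_nil_left w)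

private lemma exists_isShuffle_split :
    ∀ (w : List α) (g : α → ℕ), (∀ a, g a ≤ w.count a) →
      ∃ x y, IsShuffle x y w ∧ (∀ a, x.count a = g a) ∧
        (∀ a, y.count a + g a = w.count a) := by
  intro w
  induction w with
  | nil =>
    intro g hg
    refine ⟨[], [], .nil, fun a => ?_, fun a => ?_⟩ <;>
      · have := hg a; simp at this ⊢; omega
  | cons b w ih =>
    intro g hg
    by_cases hb : 0 < g b
    · obtain ⟨x, y, hs, hx, hy⟩ := ih (fun a => if a = b then g b - 1 else g a) (fun a => by
        show (if a = b then g b - 1 else g a) ≤ w.count a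
        have h1 := hg a
        by_cases hab : a = b
        · subst hab; rw [List.count_cons_self] at h1; rw [if_pos rfl]; omega
        · rw [List.count_cons_of_ne (Ne.symm hab)] at h1; rw [if_neg hab]; omega)
      refine ⟨b :: x, y, .left hs, fun a => ?_, fun a => ?_⟩
      · have hxa : x.count a = if a = b then g b - 1 else g a := hx a
        by_cases hab : a = b
        · subst hab; rw [List.count_cons_self]; rw [if_pos rfl] at hxa; omega
        · rw [List.count_cons_of_ne (Ne.symm hab)]; rw [if_neg hab] at hxa; omega
      · have hya : y.count a + (if a = b then g b - 1 else g a) = w.count a := hy a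
        by_cases hab : a = b
        · subst hab
          rw [List.count_cons_self]
          rw [if_pos rfl] at hya
          omega
        · rw [List.count_cons_of_ne (Ne.symm hab)]
          rw [if_neg hab] at hya
          omega
    · obtain ⟨x, y, hs, hx, hy⟩ := ih g (fun a => by
        have h1 := hg a
        by_cases hab : a = b
        · subst hab; omega
        · rw [List.count_cons_of_ne (Ne.symm hab)] at h1; omega)
      refine ⟨x, b :: y, .right hs, hx, fun a => ?_⟩
      have hya : y.count a + g a = w.count a := hy a
      by_cases hab : a = b
      · subst hab
        rw [List.count_cons_self, List.count_cons_self]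
        omega
      · rw [List.count_cons_of_ne (Ne.symm hab), List.count_cons_of_ne (Ne.symm hab)]
        omega

/-- The counting condition characterizing the `n`-fold shuffle power. -/
private def Cnd (u : List α) (Γ : Set α) (n : ℕ) (w : List α) : Prop :=
  ∀ a, (a ∈ Γ → n * u.count a ≤ w.count a) ∧ (a ∉ Γ → w.count a = n * u.count a)

private lemma mem_L1_iff (u : List α) (Γ : Set α) (w : List α) :
    w ∈ (({u} : Language α).perm).shuffle { w : List α | ∀ x ∈ w, x ∈ Γ } ↔
      Cnd u Γ 1 w := by
  constructor
  · rintro ⟨p, ⟨u', hu', hp⟩, g, hg, hs⟩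
    replace hu' : u' = u := hu'
    subst hu'
    intro a
    have hc := count_of_isShuffle hs a
    constructor
    · intro _; have := hp a; omega
    · intro ha
      have hz : g.count a = 0 := List.count_eq_zero.2 fun h => ha (hg a h)
      have := hp a; omega
  · intro h
    obtain ⟨x, y, hs, hx, hy⟩ := exists_isShuffle_split w (fun a => u.count a) (fun a => by
      show u.count a ≤ w.count a
      rcases h a with ⟨h1, h2⟩
      by_cases ha : a ∈ Γ
      · have := h1 ha; omega
      · have := h2 ha; omega)
    have hx' : ∀ a, x.count a = u.count a := hx
    have hy' : ∀ a, y.count a + u.count a = w.count a := hy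
    refine ⟨x, ⟨u, rfl, hx'⟩, y, fun a ha => ?_, hs⟩
    by_contra hag
    have h2 := (h a).2 hag
    have h3 := hy' a
    have : y.count a = 0 := by omega
    exact absurd ha (List.count_eq_zero.1 this)

private lemma cnd_of_mem_pow (u : List α) (Γ : Set α) :
    ∀ n w, w ∈ ((({u} : Language α).perm).shuffle
      { w : List α | ∀ x ∈ w, x ∈ Γ }).shufflePow n → Cnd u Γ n w := by
  intro n
  induction n with
  | zero =>
    intro w hw
    have : w = [] := hw
    subst this
    intro a; simp [List.count_nil]
  | succ n ih =>
    intro w hw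
    obtain ⟨w1, h1, w2, h2, hs⟩ := hw
    have c1 := ih w1 h1
    have c2 := (mem_L1_iff u Γ w2).1 h2
    intro a
    have hc := count_of_isShuffle hs a
    rcases c1 a with ⟨a1, a2⟩
    rcases c2 a with ⟨b1, b2⟩
    have e : (n + 1) * u.count a = n * u.count a + 1 * u.count a := by ring
    constructor
    · intro ha; have := a1 ha; have := b1 ha; linarith
    · intro ha; have := a2 ha; have := b2 ha; linarith

private lemma mem_pow_of_cnd (u : List α) (Γ : Set α) :
    ∀ n w, Cnd u Γ (n + 1) w →
      w ∈ ((({u} : Language α).perm).shuffle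
        { w : List α | ∀ x ∈ w, x ∈ Γ }).shufflePow (n + 1) := by
  intro n
  induction n with
  | zero =>
    intro w hw
    exact ⟨[], rfl, w, (mem_L1_iff u Γ w).2 hw, isShuffle_nil_left w⟩
  | succ n ih =>
    intro w hw
    have hbound : ∀ a, u.count a ≤ w.count a := by
      intro a
      rcases hw a with ⟨h1, h2⟩
      have e : (n + 1 + 1) * u.count a = (n + 1) * u.count a + u.count a := by ring
      by_cases ha : a ∈ Γ
      · have := h1 ha; linarith [Nat.zero_le ((n + 1) * u.count a)]
      · have := h2 ha; linarith [Nat.zero_le ((n + 1) * u.count a)]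
    obtain ⟨x, y, hs, hx0, hy0⟩ := exists_isShuffle_split w (fun a => u.count a) (fun a => hbound a)
    have hx : ∀ a, x.count a = u.count a := hx0
    have hy : ∀ a, y.count a + u.count a = w.count a := hy0
    have hxL : x ∈ (({u} : Language α).perm).shuffle { w : List α | ∀ x ∈ w, x ∈ Γ } :=
      (mem_L1_iff u Γ x).2 (fun a => ⟨fun _ => by have := hx a; omega,
        fun _ => by have := hx a; omega⟩)
    have hyC : Cnd u Γ (n + 1) y := by
      intro a
      rcases hw a with ⟨h1, h2⟩
      have e1 := hy a
      have e : (n + 1 + 1) * u.count a = (n + 1) * u.count a + u.count a := by ring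
      constructor
      · intro ha; have := h1 ha; linarith
      · intro ha; have := h2 ha; linarith
    exact ⟨y, ih y hyC, x, hxL, isShuffle_symm hs⟩

private lemma mem_L_iff (u : List α) (Γ : Set α) (w : List α) :
    w ∈ ((({u} : Language α).perm).shuffle
        { w : List α | ∀ x ∈ w, x ∈ Γ }).shuffleStar ↔
      w = [] ∨ ∃ n, Cnd u Γ (n + 1) w := by
  constructor
  · rintro ⟨n, hn⟩
    match n with
    | 0 => exact Or.inl hn
    | n + 1 => exact Or.inr ⟨n, cnd_of_mem_pow u Γ (n + 1) w hn⟩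
  · rintro (rfl | ⟨n, hn⟩)
    · exact ⟨0, rfl⟩
    · exact ⟨n + 1, mem_pow_of_cnd u Γ n w hn⟩

end Aux

section CountDFA

variable (α : Type*) [DecidableEq α]

private def countDFA (M B : ℕ) (P : (α → ℕ × ℕ) → Prop) :
    DFA α (α → Fin (M + 1) × Fin (B + 1)) where
  step f b := Function.update f b ((f b).1 + 1, ⟨min ((f b).2.val + 1) B, by omega⟩)
  start := fun _ => (⟨0, by omega⟩, ⟨0, by omega⟩)
  accept := { f | P fun a => (((f a).1 : ℕ), ((f a).2 : ℕ)) }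

private lemma countDFA_eval (M B : ℕ) (P : (α → ℕ × ℕ) → Prop) (w : List α) :
    (countDFA α M B P).eval w = fun a =>
      (⟨w.count a % (M + 1), Nat.mod_lt _ (Nat.succ_pos M)⟩,
       ⟨min (w.count a) B, by omega⟩) := by
  induction w using List.reverseRec with
  | nil =>
    funext a
    simp [countDFA, DFA.eval, DFA.evalFrom]
  | append_singleton w b ih =>
    rw [DFA.eval_append_singleton, ih]
    funext a
    show Function.update (fun a => ((⟨List.count a w % (M + 1), Nat.mod_lt _ (Nat.succ_pos M)⟩ : Fin (M + 1)),
          (⟨min (List.count a w) B, by omega⟩ : Fin (B + 1)))) b _ a = _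
    by_cases hab : a = b
    · subst hab
      rw [Function.update_self]
      have hc : (w ++ [a]).count a = w.count a + 1 := by simp
      refine Prod.ext (Fin.ext ?_) (Fin.ext ?_)
      · show ((⟨w.count a % (M + 1), _⟩ + 1 : Fin (M + 1)) : ℕ) = _
        rw [Fin.val_add, Fin.val_one']; simp only [hc]
        show (w.count a % (M + 1) + 1 % (M + 1)) % (M + 1) = (w.count a + 1) % (M + 1)
        rw [← Nat.add_mod]
      · show min (min (w.count a) B + 1) B = min ((w ++ [a]).count a) B
        rw [hc]; omega
    · rw [Function.update_of_ne hab]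
      have hc : (w ++ [b]).count a = w.count a := by
        simp [List.count_append, List.count_singleton', hab, Ne.symm hab]
      simp only [hc]

private lemma countDFA_accepts (M B : ℕ) (P : (α → ℕ × ℕ) → Prop) :
    (countDFA α M B P).accepts =
      { w : List α | P fun a => (w.count a % (M + 1), min (w.count a) B) } := by
  ext w
  rw [DFA.mem_accepts, countDFA_eval]
  exact Iff.rfl

private lemma isRegular_count {α : Type*} [Fintype α] [DecidableEq α] (M B : ℕ)
    (P : (α → ℕ × ℕ) → Prop) :
    Language.IsRegular
      { w : List α | P fun a => (w.count a % (M + 1), min (w.count a) B) } :=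
  ⟨Fin (Fintype.card α) → Fin (M + 1) × Fin (B + 1), inferInstance,
    DFA.reindex (Equiv.arrowCongr (Fintype.equivFin α) (Equiv.refl _)) (countDFA α M B P),
    by rw [DFA.accepts_reindex, countDFA_accepts]⟩

end CountDFA

section Positive

variable {α : Type*} [Fintype α] [DecidableEq α]

private lemma regular_of_subset (u : List α) (Γ : Set α) (hGam : ∀ x ∈ u, x ∈ Γ) :
    ((({u} : Language α).perm).shuffle
      { w : List α | ∀ x ∈ w, x ∈ Γ }).shuffleStar.IsRegular := by
  set B := u.length + 1 with hB
  set P : (α → ℕ × ℕ) → Prop := fun f =>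
    (∀ a, (f a).2 = 0) ∨
    (∀ a, (a ∈ Γ → u.count a ≤ (f a).2) ∧ (a ∉ Γ → (f a).2 = 0)) with hP
  have key : ((({u} : Language α).perm).shuffle
      { w : List α | ∀ x ∈ w, x ∈ Γ }).shuffleStar =
      { w : List α | P fun a => (w.count a % (0 + 1), min (w.count a) B) } := by
    ext w
    rw [mem_L_iff]
    simp only [Set.mem_setOf_eq, hP]
    constructor
    · rintro (rfl | ⟨n, hn⟩)
      · exact Or.inl fun a => by simp
      · refine Or.inr fun a => ⟨fun ha => ?_, fun ha => ?_⟩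
        · have h1 := (hn a).1 ha
          have h2 : u.count a ≤ (n + 1) * u.count a :=
            Nat.le_mul_of_pos_left _ (Nat.succ_pos n)
          have h3 : u.count a ≤ B := by
            have := u.count_le_length (a := a); omega
          omega
        · have h1 := (hn a).2 ha
          have h0 : u.count a = 0 := List.count_eq_zero.2 fun h => ha (hGam a h)
          rw [h0] at h1
          simp at h1
          omega
    · rintro (h | h)
      · left
        refine List.eq_nil_iff_forall_not_mem.2 fun a ha => ?_
        have := h a
        have : w.count a = 0 := by omega
        exact absurd ha (List.count_eq_zero.1 this)
      · refine Or.inr ⟨0, fun a => ⟨fun ha => ?_, fun ha => ?_⟩⟩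
        · have := (h a).1 ha; omega
        · have h1 := (h a).2 ha
          have h0 : u.count a = 0 := List.count_eq_zero.2 fun hm => ha (hGam a hm)
          omega
  rw [key]
  exact isRegular_count (α := α) 0 B P

private lemma regular_of_power (u : List α) (Γ : Set α) (a : α) (hne : u ≠ [])
    (hall : ∀ x ∈ u, x = a) (haΓ : a ∉ Γ) :
    ((({u} : Language α).perm).shuffle
      { w : List α | ∀ x ∈ w, x ∈ Γ }).shuffleStar.IsRegular := by
  set k := u.length with hkdef
  have hk : 1 ≤ k := by
    have := List.length_pos_iff.2 hne; omega
  have hcount_a : u.count a = k := by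
    rw [List.count_eq_length]
    intro b hb; exact (hall b hb).symm
  have hcount_b : ∀ b, b ≠ a → u.count b = 0 := fun b hb =>
    List.count_eq_zero.2 fun h => hb (hall b h)
  have hkk : k - 1 + 1 = k := by omega
  set P : (α → ℕ × ℕ) → Prop := fun f =>
    (∀ b, (f b).2 = 0) ∨
    (((f a).1 = 0 ∧ (f a).2 = k) ∧ ∀ b, b ∉ Γ → b ≠ a → (f b).2 = 0) with hP
  have key : ((({u} : Language α).perm).shuffle
      { w : List α | ∀ x ∈ w, x ∈ Γ }).shuffleStar =
      { w : List α | P fun b => (w.count b % (k - 1 + 1), min (w.count b) k) } := by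
    ext w
    rw [mem_L_iff]
    simp only [Set.mem_setOf_eq, hkk, hP]
    constructor
    · rintro (rfl | ⟨n, hn⟩)
      · exact Or.inl fun b => by simp
      · refine Or.inr ⟨⟨?_, ?_⟩, fun b hbΓ hba => ?_⟩
        · have h1 := (hn a).2 haΓ
          rw [h1, hcount_a, Nat.mul_mod_left]
        · have h1 := (hn a).2 haΓ
          rw [h1, hcount_a]
          have : k ≤ (n + 1) * k := Nat.le_mul_of_pos_left _ (Nat.succ_pos n)
          omega
        · have h1 := (hn b).2 hbΓ
          rw [hcount_b b hba] at h1
          simp at h1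
          omega
    · rintro (h | ⟨⟨h1, h2⟩, h3⟩)
      · left
        refine List.eq_nil_iff_forall_not_mem.2 fun b hb => ?_
        have := h b
        have : w.count b = 0 := by omega
        exact absurd hb (List.count_eq_zero.1 this)
      · right
        have hka : k ≤ w.count a := by omega
        have hdvd : k ∣ w.count a := Nat.dvd_of_mod_eq_zero h1
        have hqpos : 1 ≤ w.count a / k := Nat.div_pos hka (by omega)
        refine ⟨w.count a / k - 1, fun b => ⟨fun hbΓ => ?_, fun hbΓ => ?_⟩⟩
        · have hba : b ≠ a := fun h => haΓ (h ▸ hbΓ)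
          rw [hcount_b b hba]
          simp
        · by_cases hba : b = a
          · subst hba
            rw [hcount_a]
            have : w.count b / k - 1 + 1 = w.count b / k := by omega
            rw [this]
            exact (Nat.div_mul_cancel hdvd).symm
          · rw [hcount_b b hba]
            have := h3 b hbΓ hba
            omega
  rw [key]
  exact isRegular_count (α := α) (k - 1) k P

end Positive

section Negative

variable {α : Type*} [DecidableEq α]

private lemma count_flatten_replicate (l : List α) (n : ℕ) (a : α) :
    ((List.replicate n l).flatten).count a = n * l.count a := by
  induction n with
  | zero => simp
  | succ n ih =>
    rw [List.replicate_succ, List.flatten_cons, List.count_append, ih]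
    ring

private lemma count_filter_ne (u : List α) (c b : α) :
    (u.filter (fun x => x ≠ c)).count b = if b = c then 0 else u.count b := by
  induction u with
  | nil => simp
  | cons x u ih =>
    by_cases hx : x = c
    · subst hx
      rw [List.filter_cons_of_neg (by simp)]
      rw [ih]
      by_cases hb : b = x
      · simp [hb]
      · rw [if_neg hb, if_neg hb, List.count_cons_of_ne (Ne.symm hb)]
    · rw [List.filter_cons_of_pos (by simpa using hx)]
      by_cases hbx : b = x
      · subst hbx
        rw [List.count_cons_self, ih, if_neg hx, if_neg hx, List.count_cons_self]
      · rw [List.count_cons_of_ne (Ne.symm hbx), ih]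
        by_cases hb : b = c
        · rw [if_pos hb, if_pos hb]
        · rw [if_neg hb, if_neg hb, List.count_cons_of_ne (Ne.symm hbx)]

end Negative

theorem shuffleStar_perm_shuffle_gammaStar_regular_iff {α : Type*} [Fintype α]
    [DecidableEq α] (u : List α) (Γ : Set α) [DecidablePred (· ∈ Γ)] :
    ((({u} : Language α).perm).shuffle
        { w : List α | ∀ x ∈ w, x ∈ Γ }).shuffleStar.IsRegular ↔
      (∃ a : α, u ≠ [] ∧ ∀ x ∈ u, x = a) ∨ (∀ x ∈ u, x ∈ Γ) ∨ u = [] := by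
  constructor
  · intro hreg
    by_contra hcon
    push_neg at hcon
    obtain ⟨h1, h2, h3⟩ := hcon
    obtain ⟨c, hcu, hcΓ⟩ := h2
    obtain ⟨d, hdu, hdc⟩ := h1 c h3
    have hp : 1 ≤ u.count c := List.count_pos_iff.2 hcu
    have hq : 1 ≤ u.count d := List.count_pos_iff.2 hdu
    obtain ⟨σ, fσ, M, hM⟩ := hreg
    have : Nonempty σ := ⟨M.start⟩
    set N := Fintype.card σ with hNdef
    have hN : 1 ≤ N := Fintype.card_pos
    set p := u.count c with hpdef
    set w : List α := List.replicate (N * p) c ++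
      (List.replicate N (u.filter (fun x => x ≠ c))).flatten with hwdef
    have hwcount : ∀ b, w.count b = N * u.count b := by
      intro b
      rw [hwdef, List.count_append, List.count_replicate, count_flatten_replicate,
        count_filter_ne]
      by_cases hb : b = c
      · subst hb
        rw [if_pos (by simp), if_pos rfl, hpdef]
        ring
      · rw [if_neg (by simpa using Ne.symm hb), if_neg hb]
        ring
    have hwmem : w ∈ ((({u} : Language α).perm).shuffle
        { w : List α | ∀ x ∈ w, x ∈ Γ }).shuffleStar := by
      rw [mem_L_iff]
      refine Or.inr ⟨N - 1, fun b => ?_⟩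
      have hN1 : N - 1 + 1 = N := by omega
      rw [hN1, hwcount b]
      exact ⟨fun _ => le_refl _, fun _ => rfl⟩
    have hwlen : N ≤ w.length := by
      have : N * p ≤ w.length := by
        rw [hwdef, List.length_append, List.length_replicate]
        omega
      have : N * 1 ≤ N * p := Nat.mul_le_mul_left N hp
      omega
    obtain ⟨x, y, z, hxyz, hlen, hy, hpump⟩ :=
      M.pumping_lemma (by rw [hM]; exact hwmem) hwlen
    -- y consists only of c's
    have hxy : x ++ y = List.replicate (x.length + y.length) c := by
      have h1 : (x ++ y ++ z).take (x.length + y.length) = x ++ y := by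
        rw [← List.length_append (as := x) (bs := y)]
        exact List.take_left
      have h2 : w.take (x.length + y.length) = List.replicate (x.length + y.length) c := by
        rw [hwdef]
        rw [List.take_append_of_le_length]
        · rw [List.take_replicate]
          congr 1
          have h3 : x.length + y.length ≤ N * p := by
            have : N * 1 ≤ N * p := Nat.mul_le_mul_left N hp
            omega
          omega
        · rw [List.length_replicate]
          have : N * 1 ≤ N * p := Nat.mul_le_mul_left N hp
          omega
      rw [hxyz] at h2
      rw [h1] at h2
      exact h2
    have hyc : ∀ e ∈ y, e = c := by
      intro e he
      have : e ∈ x ++ y := List.mem_append_right x he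
      rw [hxy] at this
      exact List.eq_of_mem_replicate this
    have hycount : y.count c = y.length := by
      rw [List.count_eq_length]
      intro b hb; exact (hyc b hb).symm
    have hycount' : ∀ b, b ≠ c → y.count b = 0 := fun b hb =>
      List.count_eq_zero.2 fun h => hb (hyc b h)
    have hylen : 1 ≤ y.length := List.length_pos_iff.2 hy
    -- the pumped word
    have hw' : x ++ (y ++ y) ++ z ∈ ({x} : Language α) * KStar.kstar ({y} : Language α) * {z} := by
      refine ⟨x ++ (y ++ y), ⟨x, rfl, y ++ y, ?_, rfl⟩, z, rfl, rfl⟩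
      exact Language.mem_kstar.2 ⟨[y, y], by simp, by
        intro z hz
        simp only [List.mem_cons, List.not_mem_nil, or_false] at hz
        rcases hz with h | h <;> exact Set.mem_singleton_iff.2 h⟩
    have hw'mem : x ++ (y ++ y) ++ z ∈ M.accepts := hpump hw'
    rw [hM, mem_L_iff] at hw'mem
    have hw'count : ∀ b, (x ++ (y ++ y) ++ z).count b = w.count b + y.count b := by
      intro b
      rw [hxyz]
      simp only [List.count_append]
      omega
    rcases hw'mem with heq | ⟨n, hn⟩
    · have h4 := List.append_eq_nil_iff.1 heq
      have h5 := List.append_eq_nil_iff.1 h4.1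
      have h6 := List.append_eq_nil_iff.1 h5.2
      exact hy h6.1
    · have hc1 := (hn c).2 hcΓ
      rw [hw'count c, hwcount c, hycount] at hc1
      have hd1 : (n + 1) * u.count d ≤ N * u.count d := by
        by_cases hdΓ : d ∈ Γ
        · have := (hn d).1 hdΓ
          rw [hw'count d, hwcount d, hycount' d hdc] at this
          linarith
        · have := (hn d).2 hdΓ
          rw [hw'count d, hwcount d, hycount' d hdc] at this
          linarith
      have hd2 : n + 1 ≤ N := Nat.le_of_mul_le_mul_right hd1 (by omega)
      have hd3 : (n + 1) * p ≤ N * p := Nat.mul_le_mul_right p hd2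
      rw [hpdef] at hd3
      linarith
  · rintro (⟨a, hne, hall⟩ | hGam | rfl)
    · by_cases haΓ : a ∈ Γ
      · exact regular_of_subset u Γ fun x hx => (hall x hx) ▸ haΓ
      · exact regular_of_power u Γ a hne hall haΓ
    · exact regular_of_subset u Γ hGam
    · exact regular_of_subset [] Γ (by simp)
end
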